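/- Fix reals X > 0, c > 0, P > 0, m ∈ ℝ, and let h_ext(t) := Σ_{l∈ℤ} (X/(√(2π)·c))·exp(−(t + l·P − m)²/(2c²)), with Fourier coefficients h^(n) := (1/P)·∫₀^P h_ext(t)·exp(−2πi·n·t/P) dt and M-th Fourier partial sum h^[M](t) := Σ_{n=−M}^{M} h^(n)·exp(2πi·n·t/P). Then for every natural number M, every real a > 0, and every t ∈ ℝ: |h_ext(t) − h^[M](t)| ≤ exp(a²/(2c²))·(X/(π·a))·exp(−2π·M·a/P). -/

import Mathlib

open Real MeasureTheory intervalIntegral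
open Complex hiding exp

lemma aux_natAbs_sq (k : ℤ) : ((k.natAbs : ℝ))^2 = (k:ℝ)^2 := by
  push_cast [Nat.cast_natAbs]; rw [_root_.sq_abs]

lemma aux_qabs_summable {q : ℝ} (h0 : 0 ≤ q) (h1 : q < 1) :
    Summable (fun n : ℤ => q ^ n.natAbs) := by
  have hgeo : Summable (fun k : ℕ => q ^ k) := summable_geometric_of_lt_one h0 h1
  apply Summable.of_nat_of_neg <;> simpa using hgeo

lemma aux_gauss_summable {α : ℝ} (hα : 0 < α) :
    Summable (fun n : ℤ => Real.exp (-α * (n:ℝ)^2)) := by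
  have h1 : Summable (fun n : ℤ => Real.exp (-α) ^ n.natAbs) :=
    aux_qabs_summable (Real.exp_pos _).le (by rw [Real.exp_lt_one_iff]; linarith)
  refine Summable.of_nonneg_of_le (fun n => (Real.exp_pos _).le) (fun n => ?_) h1
  rw [← Real.exp_nat_mul]
  apply Real.exp_le_exp.mpr
  have h2 : ((n.natAbs : ℝ))^2 = (n:ℝ)^2 := aux_natAbs_sq n
  have h3 : (n.natAbs:ℝ) ≤ (n.natAbs:ℝ)^2 := by
    rcases Nat.eq_zero_or_pos n.natAbs with h | h
    · simp [h]
    · have h4 : (1:ℝ) ≤ (n.natAbs:ℝ) := by exact_mod_cast h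
      nlinarith
  nlinarith [mul_le_mul_of_nonneg_left h3 hα.le]

lemma aux_exp_ineq (c P a k : ℝ) (hc : 0 < c) (hP : 0 < P) :
    -(2*Real.pi^2*c^2/P^2)*k^2 ≤ a^2/(2*c^2) - 2*Real.pi*a*k/P := by
  have h1 : 0 ≤ (a*P - 2*Real.pi*c^2*k)^2 := sq_nonneg _
  have expand : a^2/(2*c^2) - 2*Real.pi*a*k/P + (2*Real.pi^2*c^2/P^2)*k^2
      = (a*P - 2*Real.pi*c^2*k)^2/(2*c^2*P^2) := by
    field_simp
    ring
  nlinarith [div_nonneg h1 (by positivity : (0:ℝ) ≤ 2*c^2*P^2)]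

lemma aux_tail (Cea q : ℝ) (hC : 0 ≤ Cea) (h0 : 0 ≤ q) (h1 : q < 1) (M : ℕ) :
    (∑' k : ℤ, (if k ∈ Finset.Icc (-(M:ℤ)) (M:ℤ) then (0:ℝ) else Cea * q ^ k.natAbs))
      ≤ 2 * Cea * (q ^ (M+1) * (1-q)⁻¹) := by
  set g : ℤ → ℝ := fun k => if k ∈ Finset.Icc (-(M:ℤ)) (M:ℤ) then (0:ℝ) else Cea * q ^ k.natAbs
    with hg
  have hgle : ∀ k : ℤ, g k ≤ Cea * q ^ k.natAbs := by
    intro k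
    simp only [hg]
    split
    · positivity
    · exact le_rfl
  have hgnonneg : ∀ k : ℤ, 0 ≤ g k := by
    intro k; simp only [hg]; split
    · exact le_rfl
    · positivity
  have hgsummable : Summable g :=
    Summable.of_nonneg_of_le hgnonneg hgle ((aux_qabs_summable h0 h1).mul_left Cea)
  have hnat : Summable fun k : ℕ => g k :=
    hgsummable.comp_injective (fun x y hxy => by omega)
  have hneg : Summable fun k : ℕ => g (-((k:ℤ)+1)) :=
    hgsummable.comp_injective (fun x y hxy => by omega)
  have hgeo : (∑' i : ℕ, q ^ i) = (1-q)⁻¹ := tsum_geometric_of_lt_one h0 h1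
  rw [tsum_of_nat_of_neg_add_one hnat hneg]
  have hpos : (∑' k : ℕ, g (k : ℤ)) = Cea * (q^(M+1) * (1-q)⁻¹) := by
    rw [← hnat.sum_add_tsum_nat_add (M+1)]
    have h01 : ∀ i ∈ Finset.range (M+1), g (i : ℤ) = 0 := by
      intro i hi
      simp only [Finset.mem_range] at hi
      simp only [hg]
      exact if_pos (by simp only [Finset.mem_Icc]; omega)
    rw [Finset.sum_eq_zero h01, zero_add]
    have h02 : ∀ k : ℕ, g ((k + (M+1) : ℕ) : ℤ) = (Cea * q^(M+1)) * q^k := by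
      intro k
      simp only [hg]
      rw [if_neg (by simp only [Finset.mem_Icc]; push_cast; omega)]
      simp only [Int.natAbs_natCast]
      rw [show k + (M+1) = (M+1) + k by omega, pow_add]
      ring
    rw [tsum_congr h02, tsum_mul_left, hgeo]
    ring
  have hnegval : (∑' k : ℕ, g (-((k:ℤ)+1))) = Cea * (q^(M+1) * (1-q)⁻¹) := by
    rw [← hneg.sum_add_tsum_nat_add M]
    have h01 : ∀ i ∈ Finset.range M, g (-((i:ℤ)+1)) = 0 := by
      intro i hi
      simp only [Finset.mem_range] at hi
      simp only [hg]
      exact if_pos (by simp only [Finset.mem_Icc]; omega)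
    rw [Finset.sum_eq_zero h01, zero_add]
    have h02 : ∀ k : ℕ, g (-(((k + M : ℕ):ℤ)+1)) = (Cea * q^(M+1)) * q^k := by
      intro k
      simp only [hg]
      rw [if_neg (by simp only [Finset.mem_Icc]; push_cast; omega)]
      rw [show (-(((k + M : ℕ):ℤ)+1)) = -(((k + M + 1 : ℕ) : ℤ)) by push_cast; ring]
      simp only [Int.natAbs_neg, Int.natAbs_natCast]
      rw [show k + M + 1 = (M+1) + k by omega, pow_add]
      ring
    rw [tsum_congr h02, tsum_mul_left, hgeo]
    ring
  rw [hpos, hnegval]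
  apply le_of_eq
  ring

lemma aux_theta (X c P m : ℝ) (hc : 0 < c) (hP : 0 < P) (t : ℝ) :
    ((∑' l : ℤ, (X / (Real.sqrt (2 * Real.pi) * c)) *
        Real.exp (-(t + (l : ℝ) * P - m) ^ 2 / (2 * c ^ 2)) : ℝ) : ℂ)
      = ∑' n : ℤ, ((X / P : ℝ) : ℂ) *
          Complex.exp (((-(2 * Real.pi ^ 2 * c ^ 2 / P ^ 2) * (n:ℝ) ^ 2 : ℝ) : ℂ)
            + 2 * Real.pi * Complex.I * (n : ℂ) * ((t : ℂ) - (m : ℂ)) / (P : ℂ)) := by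
  have hπ := Real.pi_pos
  set A : ℝ := 2 * Real.pi * c ^ 2 / P ^ 2 with hA
  have hA0 : 0 < A := by positivity
  have key := Complex.tsum_exp_neg_quadratic (a := (A : ℂ))
      (by simpa using hA0) (Complex.I * ((t : ℂ) - (m : ℂ)) / (P : ℂ))
  have hPC : (P : ℂ) ≠ 0 := by exact_mod_cast hP.ne'
  have hcC : (c : ℂ) ≠ 0 := by exact_mod_cast hc.ne'
  -- rewrite LHS of key
  have e1 : ∀ n : ℤ, Complex.exp (-(Real.pi:ℂ) * (A:ℂ) * (n:ℂ) ^ 2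
        + 2 * (Real.pi:ℂ) * (Complex.I * ((t : ℂ) - (m : ℂ)) / (P : ℂ)) * (n:ℂ))
      = Complex.exp (((-(2 * Real.pi ^ 2 * c ^ 2 / P ^ 2) * (n:ℝ) ^ 2 : ℝ) : ℂ)
            + 2 * Real.pi * Complex.I * (n : ℂ) * ((t : ℂ) - (m : ℂ)) / (P : ℂ)) := by
    intro n
    congr 1
    rw [hA]
    push_cast
    field_simp
  -- rewrite RHS terms of key
  have e2 : ∀ n : ℤ, Complex.exp (-(Real.pi:ℂ) / (A:ℂ)
        * ((n:ℂ) + Complex.I * (Complex.I * ((t : ℂ) - (m : ℂ)) / (P : ℂ))) ^ 2)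
      = ((Real.exp (-(t + ((-n : ℤ) : ℝ) * P - m) ^ 2 / (2 * c ^ 2)) : ℝ) : ℂ) := by
    intro n
    rw [Complex.ofReal_exp]
    congr 1
    have hπC : (Real.pi : ℂ) ≠ 0 := by exact_mod_cast Real.pi_pos.ne'
    have hI : Complex.I * (Complex.I * ((t:ℂ) - (m:ℂ)) / (P:ℂ)) = -(((t:ℂ)-(m:ℂ))/(P:ℂ)) := by
      linear_combination (((t:ℂ) - (m:ℂ))/(P:ℂ)) * Complex.I_sq
    rw [hI, hA]
    push_cast
    field_simp
    ring
  -- sqrt A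
  have e3 : (A : ℂ) ^ (1/2 : ℂ) = ((Real.sqrt (2 * Real.pi) * c / P : ℝ) : ℂ) := by
    rw [show ((1:ℂ)/2) = ((1/2 : ℝ) : ℂ) by norm_num, ← Complex.ofReal_cpow hA0.le]
    norm_cast
    rw [← Real.sqrt_eq_rpow]
    rw [show A = (Real.sqrt (2*Real.pi) * c / P)^2 by
      rw [div_pow, mul_pow, Real.sq_sqrt (by positivity : (0:ℝ) ≤ 2*Real.pi), hA]]
    exact Real.sqrt_sq (by positivity)
  have hLHS : ((∑' l : ℤ, (X / (Real.sqrt (2 * Real.pi) * c)) *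
        Real.exp (-(t + (l : ℝ) * P - m) ^ 2 / (2 * c ^ 2)) : ℝ) : ℂ)
      = ((X / (Real.sqrt (2 * Real.pi) * c) : ℝ) : ℂ) *
          ∑' l : ℤ, ((Real.exp (-(t + (l : ℝ) * P - m) ^ 2 / (2 * c ^ 2)) : ℝ) : ℂ) := by
    rw [Complex.ofReal_tsum, ← tsum_mul_left]
    exact tsum_congr fun l => Complex.ofReal_mul _ _
  rw [hLHS, tsum_mul_left]
  have h4 : (∑' n : ℤ, Complex.exp (((-(2 * Real.pi ^ 2 * c ^ 2 / P ^ 2) * (n:ℝ) ^ 2 : ℝ) : ℂ)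
            + 2 * Real.pi * Complex.I * (n : ℂ) * ((t : ℂ) - (m : ℂ)) / (P : ℂ)))
      = ∑' n : ℤ, Complex.exp (-(Real.pi:ℂ) * (A:ℂ) * (n:ℂ) ^ 2
        + 2 * (Real.pi:ℂ) * (Complex.I * ((t : ℂ) - (m : ℂ)) / (P : ℂ)) * (n:ℂ)) :=
    tsum_congr fun n => (e1 n).symm
  rw [h4, key, e3]
  have h5 : (∑' n : ℤ, Complex.exp (-(Real.pi:ℂ) / (A:ℂ)
        * ((n:ℂ) + Complex.I * (Complex.I * ((t : ℂ) - (m : ℂ)) / (P : ℂ))) ^ 2))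
      = ∑' l : ℤ, ((Real.exp (-(t + (l : ℝ) * P - m) ^ 2 / (2 * c ^ 2)) : ℝ) : ℂ) := by
    rw [tsum_congr e2]
    exact (Equiv.neg ℤ).tsum_eq fun l : ℤ =>
      ((Real.exp (-(t + (l : ℝ) * P - m) ^ 2 / (2 * c ^ 2)) : ℝ) : ℂ)
  rw [h5, ← mul_assoc]
  congr 1
  have hs : Real.sqrt (2 * Real.pi) ≠ 0 := by positivity
  push_cast
  field_simp

noncomputable def CC (X c P m : ℝ) : ℤ → ℂ := fun k =>
  ((X / P : ℝ) : ℂ) * Complex.exp (((-(2 * Real.pi ^ 2 * c ^ 2 / P ^ 2) * (k:ℝ) ^ 2 : ℝ) : ℂ))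
    * Complex.exp (-2 * Real.pi * Complex.I * (k : ℂ) * (m : ℂ) / (P : ℂ))

lemma aux_unit_norm (r : ℝ) : ‖Complex.exp ((r:ℂ) * Complex.I)‖ = 1 := by
  rw [Complex.norm_exp_ofReal_mul_I]

lemma aux_CC_norm (X c P m : ℝ) (hX : 0 < X) (hP : 0 < P) (k : ℤ) :
    ‖CC X c P m k‖ = (X / P) * Real.exp (-(2 * Real.pi ^ 2 * c ^ 2 / P ^ 2) * (k:ℝ) ^ 2) := by
  have h1 : (-2 * (Real.pi:ℂ) * Complex.I * (k : ℂ) * (m : ℂ) / (P : ℂ))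
      = ((-2 * Real.pi * (k:ℝ) * m / P : ℝ) : ℂ) * Complex.I := by push_cast; ring
  rw [CC, h1, norm_mul, norm_mul, aux_unit_norm, mul_one, ← Complex.ofReal_exp,
    Complex.norm_real, Complex.norm_real, Real.norm_eq_abs, Real.norm_eq_abs, Real.abs_exp,
    abs_of_pos (by positivity)]

lemma aux_coef (X c P m : ℝ) (hX : 0 < X) (hc : 0 < c) (hP : 0 < P)
    (hext : ℝ → ℝ)
    (hhext : ∀ t : ℝ, hext t = ∑' l : ℤ,
      (X / (Real.sqrt (2 * Real.pi) * c)) * Real.exp (-(t + (l : ℝ) * P - m) ^ 2 / (2 * c ^ 2)))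
    (coef : ℤ → ℂ)
    (hcoef : ∀ n : ℤ, coef n = (1 / (P : ℂ)) *
      ∫ t in (0:ℝ)..P, (hext t : ℂ) *
        Complex.exp (-2 * Real.pi * Complex.I * (n : ℂ) * (t : ℂ) / (P : ℂ)))
    (n : ℤ) : coef n = CC X c P m n := by
  have hPC : (P : ℂ) ≠ 0 := by exact_mod_cast hP.ne'
  have hπC : (Real.pi : ℂ) ≠ 0 := by exact_mod_cast Real.pi_pos.ne'
  set F : ℤ → ℝ → ℂ := fun k t =>
    CC X c P m k * Complex.exp (2 * Real.pi * Complex.I * ((k:ℂ) - (n:ℂ)) * (t:ℂ) / (P : ℂ)) with hF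
  -- integrand identity
  have hig : ∀ t : ℝ, (hext t : ℂ) *
      Complex.exp (-2 * Real.pi * Complex.I * (n : ℂ) * (t : ℂ) / (P : ℂ)) = ∑' k : ℤ, F k t := by
    intro t
    rw [hhext t, aux_theta X c P m hc hP t, ← tsum_mul_right]
    refine tsum_congr fun k => ?_
    rw [hF]
    simp only
    rw [CC]
    simp only [mul_assoc, ← Complex.exp_add]
    congr 2
    push_cast
    ring
  -- continuity/integrability
  have hcont : ∀ k : ℤ, Continuous (F k) := by
    intro k
    apply continuous_const.mul
    apply Complex.continuous_exp.comp
    fun_prop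
  have hInt : ∀ k : ℤ, Integrable (F k) (volume.restrict (Set.Ioc (0:ℝ) P)) :=
    fun k => (hcont k).integrableOn_Ioc
  have hFnorm : ∀ k (t : ℝ), ‖F k t‖ = ‖CC X c P m k‖ := by
    intro k t
    rw [hF]
    simp only
    rw [norm_mul, show (2 * (Real.pi:ℂ) * Complex.I * ((k:ℂ) - (n:ℂ)) * (t:ℂ) / (P : ℂ))
      = ((2 * Real.pi * ((k:ℝ) - (n:ℝ)) * t / P : ℝ) : ℂ) * Complex.I by push_cast; ring,
      aux_unit_norm, mul_one]
  have hSumNorm : Summable fun k : ℤ => ∫ t in Set.Ioc (0:ℝ) P, ‖F k t‖ ∂volume := by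
    have : ∀ k : ℤ, (∫ t in Set.Ioc (0:ℝ) P, ‖F k t‖ ∂volume) = P * ‖CC X c P m k‖ := by
      intro k
      simp_rw [hFnorm k]
      rw [setIntegral_const, measureReal_def, Real.volume_Ioc, smul_eq_mul, sub_zero, ENNReal.toReal_ofReal hP.le]
    rw [funext this]
    apply Summable.mul_left
    have := (aux_gauss_summable (α := 2 * Real.pi ^ 2 * c ^ 2 / P ^ 2)
      (by positivity)).mul_left (X / P)
    refine this.congr fun k => ?_
    rw [aux_CC_norm X c P m hX hP]
  -- interchange
  have hswap : (∫ t in (0:ℝ)..P, ∑' k : ℤ, F k t) = ∑' k : ℤ, ∫ t in (0:ℝ)..P, F k t := by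
    rw [integral_of_le hP.le]
    rw [← MeasureTheory.integral_tsum_of_summable_integral_norm hInt hSumNorm]
    exact tsum_congr fun k => (integral_of_le hP.le).symm
  -- value of each integral
  have hIval : ∀ k : ℤ, (∫ t in (0:ℝ)..P, F k t) = if k = n then CC X c P m k * P else 0 := by
    intro k
    rw [hF]
    simp only
    rw [intervalIntegral.integral_const_mul]
    rcases eq_or_ne k n with rfl | hk
    · simp only [sub_self, mul_zero, zero_mul, zero_div, if_pos rfl]
      norm_num
    · rw [if_neg hk]
      have hc' : (2 * (Real.pi:ℂ) * Complex.I * ((k:ℂ) - (n:ℂ)) / (P : ℂ)) ≠ 0 := by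
        apply div_ne_zero _ hPC
        refine mul_ne_zero (mul_ne_zero (mul_ne_zero two_ne_zero hπC) Complex.I_ne_zero) ?_
        rw [sub_ne_zero]
        exact_mod_cast hk
      have : ∀ t : ℝ, (2 * (Real.pi:ℂ) * Complex.I * ((k:ℂ) - (n:ℂ)) * (t:ℂ) / (P : ℂ))
          = (2 * (Real.pi:ℂ) * Complex.I * ((k:ℂ) - (n:ℂ)) / (P : ℂ)) * (t:ℂ) := fun t => by ring
      simp_rw [this]
      rw [integral_exp_mul_complex hc']
      rw [show (2 * (Real.pi:ℂ) * Complex.I * ((k:ℂ) - (n:ℂ)) / (P : ℂ)) * (P:ℂ)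
          = ((k - n : ℤ) : ℂ) * (2 * Real.pi * Complex.I) by push_cast; field_simp]
      rw [Complex.exp_int_mul_two_pi_mul_I]
      norm_num
  rw [hcoef n]
  calc (1 / (P:ℂ)) * ∫ t in (0:ℝ)..P, (hext t : ℂ) *
        Complex.exp (-2 * Real.pi * Complex.I * (n : ℂ) * (t : ℂ) / (P : ℂ))
      = (1 / (P:ℂ)) * ∑' k : ℤ, ∫ t in (0:ℝ)..P, F k t := by
        rw [← hswap]
        congr 1
        exact intervalIntegral.integral_congr fun t _ => hig t
    _ = (1 / (P:ℂ)) * (CC X c P m n * P) := by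
        rw [tsum_congr hIval, tsum_eq_single n (fun k hk => if_neg hk), if_pos rfl]
    _ = CC X c P m n := by field_simp

/-- **Lemma 3 of the paper.** The Fourier partial sums of the `P`-periodized
Gaussian pulse converge to it exponentially fast in the truncation order `M`:
`|h_ext(t) − h^[M](t)| ≤ e^{a²/(2c²)}·(X/(πa))·e^{-2πMa/P}` for every `a > 0`. -/
theorem fourier_truncation_error (X c P m : ℝ) (hX : 0 < X) (hc : 0 < c) (hP : 0 < P)
    (hext : ℝ → ℝ)
    (hhext : ∀ t : ℝ, hext t = ∑' l : ℤ,
      (X / (Real.sqrt (2 * Real.pi) * c)) * Real.exp (-(t + (l : ℝ) * P - m) ^ 2 / (2 * c ^ 2)))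
    (coef : ℤ → ℂ)
    (hcoef : ∀ n : ℤ, coef n = (1 / (P : ℂ)) *
      ∫ t in (0:ℝ)..P, (hext t : ℂ) *
        Complex.exp (-2 * Real.pi * Complex.I * (n : ℂ) * (t : ℂ) / (P : ℂ))) :
    ∀ (M : ℕ) (a : ℝ), 0 < a → ∀ t : ℝ,
      ‖(hext t : ℂ) - ∑ n ∈ Finset.Icc (-(M : ℤ)) (M : ℤ), coef n *
          Complex.exp (2 * Real.pi * Complex.I * (n : ℂ) * (t : ℂ) / (P : ℂ))‖
        ≤ Real.exp (a ^ 2 / (2 * c ^ 2)) * (X / (Real.pi * a)) *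
            Real.exp (-2 * Real.pi * (M : ℝ) * a / P) := by
  intro M a ha t
  have hπ := Real.pi_pos
  set α : ℝ := 2 * Real.pi ^ 2 * c ^ 2 / P ^ 2 with hα
  have hα0 : 0 < α := by rw [hα]; positivity
  set q : ℝ := Real.exp (-(2 * Real.pi * a / P)) with hq
  have hq0 : 0 < q := Real.exp_pos _
  have hq1 : q < 1 := by
    rw [hq, Real.exp_lt_one_iff]
    have : 0 < 2 * Real.pi * a / P := by positivity
    linarith
  set f : ℤ → ℂ := fun n => coef n *
    Complex.exp (2 * Real.pi * Complex.I * (n : ℂ) * (t : ℂ) / (P : ℂ)) with hf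
  -- norm of terms
  have hnormf : ∀ k : ℤ, ‖f k‖ = (X / P) * Real.exp (-α * (k:ℝ) ^ 2) := by
    intro k
    rw [hf]
    simp only
    rw [aux_coef X c P m hX hc hP hext hhext coef hcoef k, norm_mul,
      aux_CC_norm X c P m hX hP k,
      show (2 * (Real.pi:ℂ) * Complex.I * (k:ℂ) * (t:ℂ) / (P:ℂ))
        = ((2 * Real.pi * (k:ℝ) * t / P : ℝ) : ℂ) * Complex.I by push_cast; ring,
      aux_unit_norm, mul_one, hα]
  have hsumnorm : Summable fun k : ℤ => ‖f k‖ :=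
    ((aux_gauss_summable hα0).mul_left (X / P)).congr fun k => (hnormf k).symm
  have hsumf : Summable f := hsumnorm.of_norm
  -- series representation
  have hseries : (hext t : ℂ) = ∑' k : ℤ, f k := by
    rw [hhext t, aux_theta X c P m hc hP t]
    refine tsum_congr fun k => ?_
    rw [hf]
    simp only
    rw [aux_coef X c P m hX hc hP hext hhext coef hcoef k, CC]
    simp only [mul_assoc, ← Complex.exp_add]
    congr 2
    push_cast
    ring
  set s : Finset ℤ := Finset.Icc (-(M:ℤ)) (M:ℤ) with hs
  have hsplit : (hext t : ℂ) - ∑ n ∈ s, f n = ∑' k : ↑((s : Set ℤ))ᶜ, f k := by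
    have h := hsumf.sum_add_tsum_compl (s := s)
    rw [hseries, ← h]
    ring
  set Cea : ℝ := (X / P) * Real.exp (a ^ 2 / (2 * c ^ 2)) with hCea
  have hCea0 : 0 ≤ Cea := by rw [hCea]; positivity
  set g : ℤ → ℝ := fun k => if k ∈ s then (0:ℝ) else Cea * q ^ k.natAbs with hgdef
  have hgsum : Summable g := by
    refine Summable.of_nonneg_of_le (fun k => ?_) (fun k => ?_)
      ((aux_qabs_summable hq0.le hq1).mul_left Cea)
    · simp only [hgdef]; split
      · exact le_rfl
      · positivity
    · simp only [hgdef]; split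
      · positivity
      · exact le_rfl
  -- pointwise bound
  have hpt : ∀ k : ℤ, (X / P) * Real.exp (-α * (k:ℝ) ^ 2) ≤ Cea * q ^ k.natAbs := by
    intro k
    have hexp : Real.exp (-α * (k:ℝ) ^ 2)
        ≤ Real.exp (a ^ 2 / (2 * c ^ 2)) * q ^ k.natAbs := by
      rw [hq, ← Real.exp_nat_mul, ← Real.exp_add]
      apply Real.exp_le_exp.mpr
      have h1 := aux_exp_ineq c P a ((k.natAbs : ℝ)) hc hP
      have h2 : -α * (k:ℝ) ^ 2 = -(2*Real.pi^2*c^2/P^2) * ((k.natAbs:ℝ))^2 := by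
        rw [hα, aux_natAbs_sq]
      have h3 : a ^ 2 / (2 * c ^ 2) + (k.natAbs:ℝ) * -(2*Real.pi*a/P)
          = a ^ 2 / (2 * c ^ 2) - 2*Real.pi*a*(k.natAbs:ℝ)/P := by ring
      rw [h2, h3]
      exact h1
    calc (X / P) * Real.exp (-α * (k:ℝ) ^ 2)
        ≤ (X / P) * (Real.exp (a ^ 2 / (2 * c ^ 2)) * q ^ k.natAbs) :=
          mul_le_mul_of_nonneg_left hexp (by positivity)
      _ = Cea * q ^ k.natAbs := by rw [hCea]; ring
  have hptc : ∀ k : ↑((s : Set ℤ))ᶜ, ‖f k.1‖ ≤ g k.1 := by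
    intro k
    have hk : (k : ℤ) ∉ s := fun h => k.2 (Finset.mem_coe.mpr h)
    rw [hnormf, hgdef]
    simp only [if_neg hk]
    exact hpt k
  -- assemble
  rw [show (∑ n ∈ s, coef n *
      Complex.exp (2 * Real.pi * Complex.I * (n : ℂ) * (t : ℂ) / (P : ℂ))) = ∑ n ∈ s, f n
    from rfl, hsplit]
  calc ‖∑' k : ↑((s : Set ℤ))ᶜ, f k‖
      ≤ ∑' k : ↑((s : Set ℤ))ᶜ, ‖f k.1‖ := norm_tsum_le_tsum_norm (hsumnorm.subtype _)
    _ ≤ ∑' k : ↑((s : Set ℤ))ᶜ, g k.1 :=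
        Summable.tsum_le_tsum hptc (hsumnorm.subtype _) (hgsum.subtype _)
    _ = ∑' k : ℤ, g k := by
        have h := hgsum.sum_add_tsum_compl (s := s)
        have hz : ∑ i ∈ s, g i = 0 := Finset.sum_eq_zero fun i hi => by
          simp only [hgdef]; exact if_pos hi
        rw [← h, hz, zero_add]
    _ ≤ 2 * Cea * (q ^ (M+1) * (1-q)⁻¹) := aux_tail Cea q hCea0 hq0.le hq1 M
    _ ≤ Real.exp (a ^ 2 / (2 * c ^ 2)) * (X / (Real.pi * a)) *
          Real.exp (-2 * Real.pi * (M : ℝ) * a / P) := by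
        have hqM : Real.exp (-2 * Real.pi * (M : ℝ) * a / P) = q ^ M := by
          rw [hq, ← Real.exp_nat_mul]
          congr 1
          ring
        rw [hqM, hCea, pow_succ]
        have hqMpos : 0 < q ^ M := pow_pos hq0 M
        have h1q : 0 < 1 - q := by linarith
        have key : q * (2 * Real.pi * a / P) ≤ 1 - q := by
          have h1 : 2 * Real.pi * a / P + 1 ≤ Real.exp (2 * Real.pi * a / P) :=
            Real.add_one_le_exp _
          have h3 : 0 < Real.exp (2 * Real.pi * a / P) := Real.exp_pos _
          have h2 : q = (Real.exp (2 * Real.pi * a / P))⁻¹ := by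
            rw [hq, ← Real.exp_neg]
          have h4 := mul_le_mul_of_nonneg_right h1 (inv_nonneg.mpr h3.le)
          rw [mul_inv_cancel₀ h3.ne'] at h4
          rw [h2]
          nlinarith [h4]
        have main : 2 * (X / P) * (q ^ M * q * (1-q)⁻¹) ≤ (X / (Real.pi * a)) * q ^ M := by
          have e1 : 2 * (X / P) * (q ^ M * q * (1-q)⁻¹)
              = (q ^ M) * (2 * (X/P) * q * (1-q)⁻¹) := by ring
          have e2 : (X / (Real.pi * a)) * q ^ M = (q ^ M) * (X / (Real.pi * a)) := by ring
          rw [e1, e2]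
          apply mul_le_mul_of_nonneg_left _ hqMpos.le
          rw [show 2 * (X/P) * q * (1-q)⁻¹ = (2 * (X/P) * q) / (1-q) by ring,
            div_le_div_iff₀ h1q (by positivity : (0:ℝ) < Real.pi * a)]
          have hkey := mul_le_mul_of_nonneg_left key hX.le
          have e3 : 2 * (X/P) * q * (Real.pi * a) = X * (q * (2 * Real.pi * a / P)) := by
            field_simp
          rw [e3]
          exact hkey
        calc 2 * ((X/P) * Real.exp (a ^ 2 / (2 * c ^ 2))) * (q ^ M * q * (1-q)⁻¹)
            = Real.exp (a ^ 2 / (2 * c ^ 2)) * (2 * (X/P) * (q ^ M * q * (1-q)⁻¹)) := by ring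
          _ ≤ Real.exp (a ^ 2 / (2 * c ^ 2)) * ((X / (Real.pi * a)) * q ^ M) :=
              mul_le_mul_of_nonneg_left main (Real.exp_pos _).le
          _ = Real.exp (a ^ 2 / (2 * c ^ 2)) * (X / (Real.pi * a)) * q ^ M := by ring
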